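/- Let c ≥ 0 and let ρ = Σ_m p_m |ψ_m⟩⟨ψ_m| be a density matrix on H = H_1 ⊗ … ⊗ H_N, with p_m ≥ 0, Σ_m p_m = 1, and each |ψ_m⟩ a unit vector. Suppose every pure component ρ_m = |ψ_m⟩⟨ψ_m| satisfies Σ_{i,j,j' pairwise distinct} |⟨φ_{i,j}|ρ_m|φ_{i,j'}⟩| ≤ Σ_{i,j,j' pairwise distinct} sqrt( ⟨φ_i|ρ_m|φ_i⟩ · ⟨φ_{i,j,j'}|ρ_m|φ_{i,j,j'}⟩ ) + c · Σ_{i≠j} ⟨φ_{i,j}|ρ_m|φ_{i,j}⟩. Then ρ satisfies Σ_{i,j,j' pairwise distinct} |⟨φ_{i,j}|ρ|φ_{i,j'}⟩| ≤ Σ_{i,j,j' pairwise distinct} sqrt( ⟨φ_i|ρ|φ_i⟩ · ⟨φ_{i,j,j'}|ρ|φ_{i,j,j'}⟩ ) + c · Σ_{i≠j} ⟨φ_{i,j}|ρ|φ_{i,j}⟩. -/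

import Mathlib

open scoped BigOperators ComplexOrder

noncomputable section

namespace Sep

variable {N : ℕ} {d : Fin N → ℕ}

/-- The configuration (computational-basis index) of the product basis state with
local state `|1⟩` in the factors indexed by `S` and `|0⟩` in all other factors. -/
def basisCfg (hd : ∀ i, 2 ≤ d i) (S : Finset (Fin N)) : (i : Fin N) → Fin (d i) :=
  fun i => if i ∈ S then ⟨1, by have := hd i; omega⟩ else ⟨0, by have := hd i; omega⟩

/-- The outer product `|ψ⟩⟨ψ|` as a matrix in the computational basis. -/
def outer (ψ : ((i : Fin N) → Fin (d i)) → ℂ) :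
    Matrix ((i : Fin N) → Fin (d i)) ((i : Fin N) → Fin (d i)) ℂ :=
  Matrix.vecMulVec ψ (star ψ)

/-- `⟨a| ⊗ ⟨b| Π_j (ρ ⊗ ρ) Π_j |a⟩ ⊗ |b⟩`, where `Π_j` is the unitary on `H ⊗ H`
swapping the two copies of the `j`-th factor.  Since `Π_j |a⟩ ⊗ |b⟩` is the
basis vector indexed by the pair of configurations obtained from `(a, b)` by
exchanging the `j`-th coordinates, this equals the corresponding diagonal
entry of `ρ ⊗ ρ`. -/
def swapQuad (ρ : Matrix ((i : Fin N) → Fin (d i)) ((i : Fin N) → Fin (d i)) ℂ)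
    (j : Fin N) (a b : (i : Fin N) → Fin (d i)) : ℂ :=
  ρ (Function.update a j (b j)) (Function.update a j (b j)) *
    ρ (Function.update b j (a j)) (Function.update b j (a j))

/-- A pure state (state vector) is `k`-separable if `{1,…,N}` can be partitioned into
`k` (pairwise disjoint, nonempty) parts — given by the fibers of a surjection
`P : Fin N → Fin k` — such that `ψ` factorizes as a product of `k` functions, the
`l`-th of which depends only on the coordinates in part `l`. -/
def kSepPure (k : ℕ) (ψ : ((i : Fin N) → Fin (d i)) → ℂ) : Prop :=
  ∃ P : Fin N → Fin k, Function.Surjective P ∧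
    ∃ f : Fin k → (((i : Fin N) → Fin (d i)) → ℂ),
      (∀ l x y, (∀ i, P i = l → x i = y i) → f l x = f l y) ∧
      ∀ x, ψ x = ∏ l, f l x

/-- A density matrix: positive semidefinite with trace 1. -/
def IsDensityMatrix
    (ρ : Matrix ((i : Fin N) → Fin (d i)) ((i : Fin N) → Fin (d i)) ℂ) : Prop :=
  ρ.PosSemidef ∧ ρ.trace = 1

/-- A mixed state is `k`-separable if it is a convex combination of projectors onto
`k`-separable pure (unit) states, possibly separable w.r.t. different partitions. -/
def kSep (k : ℕ)
    (ρ : Matrix ((i : Fin N) → Fin (d i)) ((i : Fin N) → Fin (d i)) ℂ) : Prop :=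
  ∃ (n : ℕ) (p : Fin n → ℝ) (ψ : Fin n → ((i : Fin N) → Fin (d i)) → ℂ),
    (∀ s, 0 ≤ p s) ∧ (∑ s, p s = 1) ∧
    (∀ s, ∑ x, Complex.normSq (ψ s x) = 1) ∧
    (∀ s, kSepPure k (ψ s)) ∧
    ρ = ∑ s, (p s : ℂ) • outer (ψ s)

end Sep


section Aux

open Finset in
private lemma sum_sqrt_convex {n : ℕ} (p x y : Fin n → ℝ) (hp : ∀ s, 0 ≤ p s)
    (hx : ∀ s, 0 ≤ x s) (hy : ∀ s, 0 ≤ y s) :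
    ∑ s, p s * Real.sqrt (x s * y s) ≤
      Real.sqrt ((∑ s, p s * x s) * (∑ s, p s * y s)) := by
  have h1 : ∀ s, p s * Real.sqrt (x s * y s)
      = Real.sqrt (p s * x s) * Real.sqrt (p s * y s) := by
    intro s
    rw [← Real.sqrt_mul (mul_nonneg (hp s) (hx s)),
      show p s * x s * (p s * y s) = p s ^ 2 * (x s * y s) by ring,
      Real.sqrt_mul (sq_nonneg _), Real.sqrt_sq (hp s)]
  simp_rw [h1]
  have hnn : 0 ≤ ∑ s, Real.sqrt (p s * x s) * Real.sqrt (p s * y s) :=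
    Finset.sum_nonneg fun s _ => mul_nonneg (Real.sqrt_nonneg _) (Real.sqrt_nonneg _)
  rw [show (∑ s, p s * x s) = ∑ s, Real.sqrt (p s * x s) ^ 2 by
      exact Finset.sum_congr rfl fun s _ => (Real.sq_sqrt (mul_nonneg (hp s) (hx s))).symm,
    show (∑ s, p s * y s) = ∑ s, Real.sqrt (p s * y s) ^ 2 by
      exact Finset.sum_congr rfl fun s _ => (Real.sq_sqrt (mul_nonneg (hp s) (hy s))).symm]
  have hy2 : (0:ℝ) ≤ (∑ s, Real.sqrt (p s * x s) ^ 2) * (∑ s, Real.sqrt (p s * y s) ^ 2) := by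
    positivity
  exact (Real.le_sqrt hnn hy2).2 (Finset.sum_mul_sq_le_sq_mul_sq _ _ _)

private lemma sum_swap3 {N n : ℕ} (g : Fin N → Fin N → Fin n → ℝ) :
    (∑ i, ∑ j, ∑ s, g i j s) = ∑ s, ∑ i, ∑ j, g i j s := by
  have e1 : ∀ i : Fin N, (∑ j, ∑ s, g i j s) = ∑ s, ∑ j, g i j s :=
    fun i => Finset.sum_comm
  simp only [e1]
  exact Finset.sum_comm

private lemma sum_swap4 {N n : ℕ} (g : Fin N → Fin N → Fin N → Fin n → ℝ) :
    (∑ i, ∑ j, ∑ j', ∑ s, g i j j' s) = ∑ s, ∑ i, ∑ j, ∑ j', g i j j' s := by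
  have e1 : ∀ i : Fin N, (∑ j, ∑ j', ∑ s, g i j j' s) = ∑ s, ∑ j, ∑ j', g i j j' s :=
    fun i => sum_swap3 (g i)
  simp only [e1]
  exact Finset.sum_comm

end Aux

open Sep in
/-- Convexity step of the proof of Theorem 1: if every pure component of the
mixture `ρ = Σ_m p_m |ψ_m⟩⟨ψ_m|` satisfies the inequality
`Σ_{i,j,j'} |⟨φ_{i,j}|ρ_m|φ_{i,j'}⟩| ≤
 Σ_{i,j,j'} sqrt(⟨φ_i|ρ_m|φ_i⟩⟨φ_{i,j,j'}|ρ_m|φ_{i,j,j'}⟩) + c Σ_{i≠j} ⟨φ_{i,j}|ρ_m|φ_{i,j}⟩`,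
then so does `ρ`. -/
theorem mixture_inequality_of_components
    {N : ℕ} {d : Fin N → ℕ} (hd : ∀ i, 2 ≤ d i)
    (c : ℝ) (hc : 0 ≤ c)
    (n : ℕ) (p : Fin n → ℝ) (ψ : Fin n → ((i : Fin N) → Fin (d i)) → ℂ)
    (hp : ∀ s, 0 ≤ p s) (hp1 : ∑ s, p s = 1)
    (hψ : ∀ s, ∑ x, Complex.normSq (ψ s x) = 1)
    (ρ : Matrix ((i : Fin N) → Fin (d i)) ((i : Fin N) → Fin (d i)) ℂ)
    (hρ : ρ = ∑ s, (p s : ℂ) • outer (ψ s))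
    (hcomp : ∀ s,
      (∑ i : Fin N, ∑ j : Fin N, ∑ j' : Fin N,
          if i ≠ j ∧ i ≠ j' ∧ j ≠ j' then
            ‖(outer (ψ s)) (basisCfg hd {i, j}) (basisCfg hd {i, j'})‖
          else 0) ≤
        (∑ i : Fin N, ∑ j : Fin N, ∑ j' : Fin N,
          if i ≠ j ∧ i ≠ j' ∧ j ≠ j' then
            Real.sqrt (((outer (ψ s)) (basisCfg hd {i}) (basisCfg hd {i})).re *
              ((outer (ψ s)) (basisCfg hd {i, j, j'}) (basisCfg hd {i, j, j'})).re)
          else 0) +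
          c * ∑ i : Fin N, ∑ j : Fin N,
            (if i ≠ j then ((outer (ψ s)) (basisCfg hd {i, j}) (basisCfg hd {i, j})).re
             else 0)) :
    (∑ i : Fin N, ∑ j : Fin N, ∑ j' : Fin N,
        if i ≠ j ∧ i ≠ j' ∧ j ≠ j' then
          ‖ρ (basisCfg hd {i, j}) (basisCfg hd {i, j'})‖
        else 0) ≤
      (∑ i : Fin N, ∑ j : Fin N, ∑ j' : Fin N,
        if i ≠ j ∧ i ≠ j' ∧ j ≠ j' then
          Real.sqrt ((ρ (basisCfg hd {i}) (basisCfg hd {i})).re *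
            (ρ (basisCfg hd {i, j, j'}) (basisCfg hd {i, j, j'})).re)
        else 0) +
        c * ∑ i : Fin N, ∑ j : Fin N,
          (if i ≠ j then (ρ (basisCfg hd {i, j}) (basisCfg hd {i, j})).re else 0) := by
  classical
  have hF : ∀ a b, ρ a b = ∑ s, (p s : ℂ) * (outer (ψ s)) a b := by
    intro a b; rw [hρ]; simp [Matrix.sum_apply]
  have hre : ∀ a b, (ρ a b).re = ∑ s, p s * ((outer (ψ s)) a b).re := by
    intro a b; rw [hF a b, Complex.re_sum]
    exact Finset.sum_congr rfl fun s _ => by simp [Complex.mul_re]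
  have habs : ∀ a b, ‖ρ a b‖ ≤ ∑ s, p s * ‖(outer (ψ s)) a b‖ := by
    intro a b; rw [hF a b]
    refine (norm_sum_le _ _).trans_eq ?_
    exact Finset.sum_congr rfl fun s _ => by
      rw [norm_mul, Complex.norm_real, Real.norm_of_nonneg (hp s)]
  have hnn : ∀ s a, 0 ≤ ((outer (ψ s)) a a).re := by
    intro s a
    simp [outer, Matrix.vecMulVec_apply, Complex.mul_re]
    nlinarith [sq_nonneg ((ψ s a).re), sq_nonneg ((ψ s a).im)]
  have hite : ∀ (P : Prop) [Decidable P] (f : Fin n → ℝ),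
      (if P then ∑ s, f s else 0) = ∑ s, (if P then f s else 0) := by
    intro P _ f; split <;> simp
  calc (∑ i : Fin N, ∑ j : Fin N, ∑ j' : Fin N,
        if i ≠ j ∧ i ≠ j' ∧ j ≠ j' then
          ‖ρ (basisCfg hd {i, j}) (basisCfg hd {i, j'})‖ else 0)
      ≤ ∑ i : Fin N, ∑ j : Fin N, ∑ j' : Fin N,
        if i ≠ j ∧ i ≠ j' ∧ j ≠ j' then
          (∑ s, p s * ‖(outer (ψ s)) (basisCfg hd {i, j}) (basisCfg hd {i, j'})‖)
        else 0 := by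
        refine Finset.sum_le_sum fun i _ => Finset.sum_le_sum fun j _ =>
          Finset.sum_le_sum fun j' _ => ?_
        split
        · exact habs _ _
        · exact le_rfl
    _ = ∑ s, p s * (∑ i : Fin N, ∑ j : Fin N, ∑ j' : Fin N,
          if i ≠ j ∧ i ≠ j' ∧ j ≠ j' then
            ‖(outer (ψ s)) (basisCfg hd {i, j}) (basisCfg hd {i, j'})‖ else 0) := by
        simp only [hite]
        rw [sum_swap4]
        refine Finset.sum_congr rfl fun s _ => ?_
        rw [Finset.mul_sum]
        refine Finset.sum_congr rfl fun i _ => ?_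
        rw [Finset.mul_sum]
        refine Finset.sum_congr rfl fun j _ => ?_
        rw [Finset.mul_sum]
        refine Finset.sum_congr rfl fun j' _ => ?_
        split <;> simp
    _ ≤ ∑ s, p s * ((∑ i : Fin N, ∑ j : Fin N, ∑ j' : Fin N,
          if i ≠ j ∧ i ≠ j' ∧ j ≠ j' then
            Real.sqrt (((outer (ψ s)) (basisCfg hd {i}) (basisCfg hd {i})).re *
              ((outer (ψ s)) (basisCfg hd {i, j, j'}) (basisCfg hd {i, j, j'})).re) else 0) +
          c * ∑ i : Fin N, ∑ j : Fin N,
            (if i ≠ j then ((outer (ψ s)) (basisCfg hd {i, j}) (basisCfg hd {i, j})).re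
             else 0)) :=
        Finset.sum_le_sum fun s _ => mul_le_mul_of_nonneg_left (hcomp s) (hp s)
    _ = (∑ s, p s * (∑ i : Fin N, ∑ j : Fin N, ∑ j' : Fin N,
          if i ≠ j ∧ i ≠ j' ∧ j ≠ j' then
            Real.sqrt (((outer (ψ s)) (basisCfg hd {i}) (basisCfg hd {i})).re *
              ((outer (ψ s)) (basisCfg hd {i, j, j'}) (basisCfg hd {i, j, j'})).re) else 0)) +
        c * ∑ s, p s * (∑ i : Fin N, ∑ j : Fin N,
            (if i ≠ j then ((outer (ψ s)) (basisCfg hd {i, j}) (basisCfg hd {i, j})).re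
             else 0)) := by
        rw [Finset.mul_sum, ← Finset.sum_add_distrib]
        exact Finset.sum_congr rfl fun s _ => by ring
    _ ≤ _ := by
        refine add_le_add ?_ ?_
        · -- sqrt part
          have expand : (∑ s, p s * (∑ i : Fin N, ∑ j : Fin N, ∑ j' : Fin N,
                if i ≠ j ∧ i ≠ j' ∧ j ≠ j' then
                  Real.sqrt (((outer (ψ s)) (basisCfg hd {i}) (basisCfg hd {i})).re *
                    ((outer (ψ s)) (basisCfg hd {i, j, j'}) (basisCfg hd {i, j, j'})).re)
                else 0))
              = ∑ i : Fin N, ∑ j : Fin N, ∑ j' : Fin N, ∑ s,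
                (if i ≠ j ∧ i ≠ j' ∧ j ≠ j' then
                  p s * Real.sqrt (((outer (ψ s)) (basisCfg hd {i}) (basisCfg hd {i})).re *
                    ((outer (ψ s)) (basisCfg hd {i, j, j'}) (basisCfg hd {i, j, j'})).re)
                else 0) := by
            rw [sum_swap4]
            refine Finset.sum_congr rfl fun s _ => ?_
            rw [Finset.mul_sum]
            refine Finset.sum_congr rfl fun i _ => ?_
            rw [Finset.mul_sum]
            refine Finset.sum_congr rfl fun j _ => ?_
            rw [Finset.mul_sum]
            refine Finset.sum_congr rfl fun j' _ => ?_
            split <;> simp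
          rw [expand]
          refine Finset.sum_le_sum fun i _ => Finset.sum_le_sum fun j _ =>
            Finset.sum_le_sum fun j' _ => ?_
          by_cases hcond : i ≠ j ∧ i ≠ j' ∧ j ≠ j'
          · simp only [if_pos hcond]
            rw [hre, hre]
            exact sum_sqrt_convex _ _ _ hp (fun s => hnn s _) (fun s => hnn s _)
          · simp only [if_neg hcond, Finset.sum_const_zero]
            exact le_rfl
        · -- c part
          refine mul_le_mul_of_nonneg_left (le_of_eq ?_) hc
          have expand : (∑ s, p s * (∑ i : Fin N, ∑ j : Fin N,
                (if i ≠ j then ((outer (ψ s)) (basisCfg hd {i, j}) (basisCfg hd {i, j})).re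
                 else 0)))
              = ∑ i : Fin N, ∑ j : Fin N, ∑ s,
                (if i ≠ j then p s * ((outer (ψ s)) (basisCfg hd {i, j}) (basisCfg hd {i, j})).re
                 else 0) := by
            rw [sum_swap3]
            refine Finset.sum_congr rfl fun s _ => ?_
            rw [Finset.mul_sum]
            refine Finset.sum_congr rfl fun i _ => ?_
            rw [Finset.mul_sum]
            refine Finset.sum_congr rfl fun j _ => ?_
            split <;> simp
          rw [expand]
          refine Finset.sum_congr rfl fun i _ => Finset.sum_congr rfl fun j _ => ?_
          rw [← hite, hre]
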